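/- There exists a unique bounded measurable function u : [0,T] × X → ℝ satisfying u(t,x) = v(t,x) + ∫₀^t ( ∫_X p(t−s, x, y) f(s, y, u(s,y)) dm(y) ) ds for all (t,x) ∈ [0,T] × X, and this u is continuous on [0,T] × X. -/

import Mathlib

open MeasureTheory Set

open Filter Topology

lemma aux_ind_meas {α : Type*} [TopologicalSpace α] [MeasurableSpace α]
    [BorelSpace α] {g : α → ℝ} {s : Set α} (hs : MeasurableSet s)
    (hg : ContinuousOn g s) : Measurable (s.indicator g) := by
  have hemb : MeasurableEmbedding ((↑) : s → α) := MeasurableEmbedding.subtype_coe hs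
  have hgm : Measurable (fun a : s => g a) :=
    (continuousOn_iff_continuous_restrict.mp hg).measurable
  have H := hemb.measurable_extend hgm (measurable_const (a := (0:ℝ)))
  convert H using 1
  funext a
  by_cases ha : a ∈ s
  · rw [Set.indicator_of_mem ha]
    have : Function.extend ((↑) : s → α) (fun a : s => g a) (fun _ => (0:ℝ))
        ((⟨a, ha⟩ : s) : α) = g (⟨a, ha⟩ : s) :=
      Subtype.coe_injective.extend_apply _ _ _
    simpa using this.symm
  · rw [Set.indicator_of_notMem ha, Function.extend_apply']
    rintro ⟨⟨b, hb⟩, rfl⟩; exact ha hb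

lemma aux_int_one {X : Type*} [MeasurableSpace X] {m : Measure X} {k : X → ℝ}
    (h : ∫ y, k y ∂m = 1) : Integrable k m := by
  by_contra hc
  rw [integral_undef hc] at h
  exact one_ne_zero h.symm

lemma aux_bound {X : Type*} [MeasurableSpace X] {m : Measure X} {k g : X → ℝ}
    (hk : Integrable k m) (hk0 : ∀ y, 0 ≤ k y) (hk1 : ∫ y, k y ∂m = 1)
    (hg : AEStronglyMeasurable g m) {M : ℝ} (hgM : ∀ y, |g y| ≤ M) :
    Integrable (fun y => k y * g y) m ∧ |∫ y, k y * g y ∂m| ≤ M := by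
  have hbd : ∀ y, ‖k y * g y‖ ≤ M * k y := by
    intro y
    rw [norm_mul, Real.norm_eq_abs, Real.norm_eq_abs, abs_of_nonneg (hk0 y)]
    calc k y * |g y| ≤ k y * M := mul_le_mul_of_nonneg_left (hgM y) (hk0 y)
      _ = M * k y := mul_comm _ _
  have hint : Integrable (fun y => k y * g y) m := by
    refine Integrable.mono' (hk.const_mul M) (hk.aestronglyMeasurable.mul hg) ?_
    filter_upwards with y using hbd y
  refine ⟨hint, ?_⟩
  calc |∫ y, k y * g y ∂m| ≤ ∫ y, M * k y ∂m := by
        rw [← Real.norm_eq_abs]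
        refine (norm_integral_le_integral_norm _).trans ?_
        refine integral_mono_of_nonneg (Filter.Eventually.of_forall fun y => norm_nonneg _)
          (hk.const_mul M) (Filter.Eventually.of_forall fun y => hbd y)
    _ = M := by rw [integral_const_mul, hk1, mul_one]

lemma aux_min_abs (a b : ℝ) : |a - b| = a + b - 2 * min a b := by
  rcases le_total a b with h | h
  · rw [min_eq_left h, abs_of_nonpos (by linarith)]; ring
  · rw [min_eq_right h, abs_of_nonneg (by linarith)]; ring

lemma aux_scheffe {X : Type*} [MeasurableSpace X] {m : Measure X}
    {α : Type*} {l : Filter α} [l.IsCountablyGenerated]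
    {k : α → X → ℝ} {k₀ : X → ℝ}
    (hk : ∀ᶠ q in l, Integrable (k q) m)
    (hk0 : ∀ᶠ q in l, ∀ y, 0 ≤ k q y)
    (hk1 : ∀ᶠ q in l, ∫ y, k q y ∂m = 1)
    (hk₀ : Integrable k₀ m) (hk₀0 : ∀ y, 0 ≤ k₀ y) (hk₀1 : ∫ y, k₀ y ∂m = 1)
    (hptw : ∀ y, Tendsto (fun q => k q y) l (𝓝 (k₀ y)))
    {g : X → ℝ} (hg : AEStronglyMeasurable g m) {M : ℝ} (hgM : ∀ y, |g y| ≤ M) :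
    Tendsto (fun q => ∫ y, k q y * g y ∂m) l (𝓝 (∫ y, k₀ y * g y ∂m)) := by
  rcases l.eq_or_neBot with rfl | hne
  · exact tendsto_bot
  -- AESM of min
  have hminm : ∀ᶠ q in l, AEStronglyMeasurable (fun y => min (k q y) (k₀ y)) m := by
    filter_upwards [hk] with q hq
    exact (aestronglyMeasurable_iff_aemeasurable.mpr
      (hq.aemeasurable.min hk₀.aemeasurable))
  have hminbd : ∀ᶠ q in l, ∀ᵐ y ∂m, ‖min (k q y) (k₀ y)‖ ≤ k₀ y := by
    filter_upwards [hk0] with q hq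
    filter_upwards with y
    rw [Real.norm_eq_abs, abs_of_nonneg (le_min (hq y) (hk₀0 y))]
    exact min_le_right _ _
  have hminint : ∀ᶠ q in l, Integrable (fun y => min (k q y) (k₀ y)) m := by
    filter_upwards [hminm, hminbd] with q h1 h2
    exact Integrable.mono' hk₀ h1 h2
  -- DCT for min
  have hmin_t : Tendsto (fun q => ∫ y, min (k q y) (k₀ y) ∂m) l (𝓝 (∫ y, k₀ y ∂m)) := by
    have h := tendsto_integral_filter_of_dominated_convergence (μ := m) (F := fun q y => min (k q y) (k₀ y))
      (f := k₀) (bound := k₀) hminm hminbd hk₀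
      (Filter.Eventually.of_forall fun y => by
        have : Tendsto (fun q => min (k q y) (k₀ y)) l (𝓝 (min (k₀ y) (k₀ y))) :=
          (hptw y).min tendsto_const_nhds
        simpa using this)
    exact h
  -- L1 convergence
  have hL1 : Tendsto (fun q => ∫ y, |k q y - k₀ y| ∂m) l (𝓝 0) := by
    have heq : ∀ᶠ q in l, ∫ y, |k q y - k₀ y| ∂m
        = 2 - 2 * ∫ y, min (k q y) (k₀ y) ∂m := by
      filter_upwards [hk, hk1, hminint] with q hqi hq1 hqm
      have : ∫ y, |k q y - k₀ y| ∂m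
          = ∫ y, (k q y + k₀ y - 2 * min (k q y) (k₀ y)) ∂m := by
        congr 1; funext y; exact aux_min_abs _ _
      have h3 := integral_sub (μ := m) (f := fun y => k q y + k₀ y)
        (g := fun y => 2 * min (k q y) (k₀ y)) (hqi.add hk₀) (hqm.const_mul 2)
      have h4 := integral_add (μ := m) (f := fun y => k q y) (g := fun y => k₀ y) hqi hk₀
      rw [this, h3, h4, integral_const_mul, hq1, hk₀1]
      ring
    have h2 : Tendsto (fun q => 2 - 2 * ∫ y, min (k q y) (k₀ y) ∂m) l (𝓝 0) := by
      have := (hmin_t.const_mul 2).const_sub 2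
      rw [hk₀1] at this
      simpa using this
    exact h2.congr' (by filter_upwards [heq] with q h using h.symm)
  -- conclusion
  rw [tendsto_iff_norm_sub_tendsto_zero]
  have hbd : ∀ᶠ q in l, ‖(∫ y, k q y * g y ∂m) - ∫ y, k₀ y * g y ∂m‖
      ≤ M * ∫ y, |k q y - k₀ y| ∂m := by
    filter_upwards [hk, hk0, hk1] with q hqi hq0 hq1
    have hint1 := (aux_bound hqi hq0 hq1 hg hgM).1
    have hint0 := (aux_bound hk₀ hk₀0 hk₀1 hg hgM).1
    have hdiff : (∫ y, k q y * g y ∂m) - ∫ y, k₀ y * g y ∂m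
        = ∫ y, (k q y - k₀ y) * g y ∂m := by
      rw [← integral_sub hint1 hint0]; congr 1; funext y; ring
    rw [hdiff]
    calc ‖∫ y, (k q y - k₀ y) * g y ∂m‖ ≤ ∫ y, ‖(k q y - k₀ y) * g y‖ ∂m :=
          norm_integral_le_integral_norm _
      _ ≤ ∫ y, M * |k q y - k₀ y| ∂m := by
          refine integral_mono_of_nonneg (Filter.Eventually.of_forall fun y => norm_nonneg _)
            (((hqi.sub hk₀).abs).const_mul M) (Filter.Eventually.of_forall fun y => ?_)
          show ‖(k q y - k₀ y) * g y‖ ≤ M * |k q y - k₀ y|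
          rw [norm_mul, Real.norm_eq_abs, Real.norm_eq_abs, mul_comm M]
          exact mul_le_mul_of_nonneg_left (hgM y) (abs_nonneg _)
      _ = M * ∫ y, |k q y - k₀ y| ∂m := integral_const_mul _ _
  have hM0 : Tendsto (fun q => M * ∫ y, |k q y - k₀ y| ∂m) l (𝓝 0) := by
    simpa using hL1.const_mul M
  exact squeeze_zero' (Filter.Eventually.of_forall fun q => norm_nonneg _) hbd hM0

/-- Context: `(X,d)` a metric space with a σ-finite Borel measure `m` satisfying
`m(B(x,r)) ≤ C_m r^{d_f}` (`C_m, d_f > 0`); `d_w > d_f`, `d_J > 1`,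
`d_s = 2 d_f / d_w` with `d_s/2 < 1`; `T > 0`; `p : (0,T] × X × X → [0,∞)` jointly
continuous with `∫_X p(t,x,y) dm(y) = 1` and satisfying
(i) `|p(t,x,y₁) − p(t,x,y₂)| ≤ c₁ t⁻¹ d(y₁,y₂)^{d_w − d_f}` and
(ii) `p(t,x,y) ≤ c₂ t^{−d_s/2} exp(−c₃ (d(x,y)^{d_w}/t)^{1/(d_J−1)})`
(`c₁, c₂, c₃ > 0`); `f : [0,T] × X × ℝ → ℝ` measurable with `|f| ≤ C_f` and
`|f(s,y₁,r₁) − f(s,y₂,r₂)| ≤ K_f (d(y₁,y₂) + |r₁ − r₂|)` (`C_f, K_f > 0`);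
`v : [0,T] × X → ℝ` bounded and continuous.

Claim: there exists a unique bounded measurable `u : [0,T] × X → ℝ` with
`u(t,x) = v(t,x) + ∫₀ᵗ (∫_X p(t−s,x,y) f(s,y,u(s,y)) dm(y)) ds` for all
`(t,x) ∈ [0,T] × X`, and this `u` is continuous on `[0,T] × X`. -/
theorem statement12
    {X : Type*} [MetricSpace X] [MeasurableSpace X] [BorelSpace X]
    (m : Measure X) [SigmaFinite m]
    (Cm df dw dJ ds T : ℝ)
    (hCm : 0 < Cm) (hdf : 0 < df) (hdw : df < dw) (hdJ : 1 < dJ)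
    (hds : ds = 2 * df / dw) (hds2 : ds / 2 < 1) (hT : 0 < T)
    (hball : ∀ (x : X) (r : ℝ), 0 < r →
      m (Metric.closedBall x r) ≤ ENNReal.ofReal (Cm * r ^ df))
    (p : ℝ → X → X → ℝ)
    (hp_cont : ContinuousOn (fun q : ℝ × X × X => p q.1 q.2.1 q.2.2)
      (Set.Ioc (0 : ℝ) T ×ˢ (Set.univ : Set (X × X))))
    (hp_nonneg : ∀ t ∈ Set.Ioc (0 : ℝ) T, ∀ x y : X, 0 ≤ p t x y)
    (hp_one : ∀ t ∈ Set.Ioc (0 : ℝ) T, ∀ x : X, ∫ y, p t x y ∂m = 1)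
    (c₁ c₂ c₃ : ℝ) (hc₁ : 0 < c₁) (hc₂ : 0 < c₂) (hc₃ : 0 < c₃)
    (hp_hold : ∀ t ∈ Set.Ioc (0 : ℝ) T, ∀ x y₁ y₂ : X,
      |p t x y₁ - p t x y₂| ≤ c₁ * t⁻¹ * dist y₁ y₂ ^ (dw - df))
    (hp_ub : ∀ t ∈ Set.Ioc (0 : ℝ) T, ∀ x y : X,
      p t x y ≤ c₂ * t ^ (-ds / 2) *
        Real.exp (-c₃ * (dist x y ^ dw / t) ^ (1 / (dJ - 1))))
    (f : ℝ → X → ℝ → ℝ)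
    (hf_meas : Measurable fun q : ℝ × X × ℝ => f q.1 q.2.1 q.2.2)
    (Cf Kf : ℝ) (hCf : 0 < Cf) (hKf : 0 < Kf)
    (hf_bdd : ∀ s ∈ Set.Icc (0 : ℝ) T, ∀ (y : X) (r : ℝ), |f s y r| ≤ Cf)
    (hf_lip : ∀ s ∈ Set.Icc (0 : ℝ) T, ∀ (y₁ y₂ : X) (r₁ r₂ : ℝ),
      |f s y₁ r₁ - f s y₂ r₂| ≤ Kf * (dist y₁ y₂ + |r₁ - r₂|))
    (v : ℝ → X → ℝ)
    (hv_cont : ContinuousOn (fun q : ℝ × X => v q.1 q.2)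
      (Set.Icc (0 : ℝ) T ×ˢ (Set.univ : Set X)))
    (Cv : ℝ) (hv_bdd : ∀ t ∈ Set.Icc (0 : ℝ) T, ∀ x : X, |v t x| ≤ Cv) :
    ∃ u : ℝ → X → ℝ,
      ((Measurable fun q : ℝ × X => u q.1 q.2) ∧
        (∃ Cu : ℝ, ∀ t ∈ Set.Icc (0 : ℝ) T, ∀ x : X, |u t x| ≤ Cu) ∧
        (∀ t ∈ Set.Icc (0 : ℝ) T, ∀ x : X,
          u t x = v t x
            + ∫ s in Set.Ioo (0 : ℝ) t, ∫ y, p (t - s) x y * f s y (u s y) ∂m) ∧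
        ContinuousOn (fun q : ℝ × X => u q.1 q.2)
          (Set.Icc (0 : ℝ) T ×ˢ (Set.univ : Set X))) ∧
      ∀ u' : ℝ → X → ℝ,
        (Measurable fun q : ℝ × X => u' q.1 q.2) →
        (∃ Cu : ℝ, ∀ t ∈ Set.Icc (0 : ℝ) T, ∀ x : X, |u' t x| ≤ Cu) →
        (∀ t ∈ Set.Icc (0 : ℝ) T, ∀ x : X,
          u' t x = v t x
            + ∫ s in Set.Ioo (0 : ℝ) t, ∫ y, p (t - s) x y * f s y (u' s y) ∂m) →
        ∀ t ∈ Set.Icc (0 : ℝ) T, ∀ x : X, u' t x = u t x := by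
  -- time increments land in the kernel's domain
  have hts : ∀ {t s : ℝ}, t ∈ Icc (0:ℝ) T → s ∈ Ioo (0:ℝ) t → (t - s) ∈ Ioc (0:ℝ) T := by
    intro t s ht hs
    exact ⟨by linarith [hs.1, hs.2], by linarith [hs.1, ht.2]⟩
  have hIooIcc : ∀ {t s : ℝ}, t ∈ Icc (0:ℝ) T → s ∈ Ioo (0:ℝ) t → s ∈ Icc (0:ℝ) T := by
    intro t s ht hs
    exact ⟨hs.1.le, hs.2.le.trans ht.2⟩
  -- kernel integrability
  have hpint : ∀ τ ∈ Ioc (0:ℝ) T, ∀ x : X, Integrable (fun y => p τ x y) m :=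
    fun τ hτ x => aux_int_one (hp_one τ hτ x)
  -- measurability of the nonlinearity composed with a measurable function
  have hgmeas : ∀ (w : ℝ → X → ℝ), Measurable (fun q : ℝ × X => w q.1 q.2) →
      ∀ s : ℝ, Measurable (fun y => f s y (w s y)) := by
    intro w hw s
    have h1 : Measurable (fun y : X => w s y) :=
      hw.comp (measurable_const.prodMk measurable_id)
    exact hf_meas.comp (measurable_const.prodMk (measurable_id.prodMk h1))
  -- inner integral: integrability and uniform bound
  have hInner : ∀ (w : ℝ → X → ℝ), Measurable (fun q : ℝ × X => w q.1 q.2) →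
      ∀ s ∈ Icc (0:ℝ) T, ∀ τ ∈ Ioc (0:ℝ) T, ∀ x : X,
      Integrable (fun y => p τ x y * f s y (w s y)) m ∧
        |∫ y, p τ x y * f s y (w s y) ∂m| ≤ Cf := by
    intro w hw s hs τ hτ x
    exact aux_bound (hpint τ hτ x) (hp_nonneg τ hτ x) (hp_one τ hτ x)
      (hgmeas w hw s).aestronglyMeasurable (fun y => hf_bdd s hs y _)
  -- inner integral: Lipschitz estimate
  have hInnerLip : ∀ (w w' : ℝ → X → ℝ),
      Measurable (fun q : ℝ × X => w q.1 q.2) →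
      Measurable (fun q : ℝ × X => w' q.1 q.2) →
      ∀ s ∈ Icc (0:ℝ) T, ∀ c : ℝ, (∀ y, |w s y - w' s y| ≤ c) →
      ∀ τ ∈ Ioc (0:ℝ) T, ∀ x : X,
      |(∫ y, p τ x y * f s y (w s y) ∂m) - ∫ y, p τ x y * f s y (w' s y) ∂m|
        ≤ Kf * c := by
    intro w w' hw hw' s hs c hc τ hτ x
    have h1 := (hInner w hw s hs τ hτ x).1
    have h2 := (hInner w' hw' s hs τ hτ x).1
    have hdiff : (∫ y, p τ x y * f s y (w s y) ∂m) - ∫ y, p τ x y * f s y (w' s y) ∂m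
        = ∫ y, p τ x y * (f s y (w s y) - f s y (w' s y)) ∂m := by
      rw [← integral_sub h1 h2]; congr 1; funext y; ring
    rw [hdiff]
    refine (aux_bound (hpint τ hτ x) (hp_nonneg τ hτ x) (hp_one τ hτ x)
      (((hgmeas w hw s).sub (hgmeas w' hw' s)).aestronglyMeasurable)
      (M := Kf * c) (fun y => ?_)).2
    calc |f s y (w s y) - f s y (w' s y)| ≤ Kf * (dist y y + |w s y - w' s y|) :=
          hf_lip s hs y y _ _
      _ = Kf * |w s y - w' s y| := by rw [dist_self, zero_add]
      _ ≤ Kf * c := mul_le_mul_of_nonneg_left (hc y) hKf.le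
  -- measurability in time of the inner integral
  have hAESM : ∀ (w : ℝ → X → ℝ), Measurable (fun q : ℝ × X => w q.1 q.2) →
      ∀ t ∈ Icc (0:ℝ) T, ∀ x : X,
      AEStronglyMeasurable (fun s => ∫ y, p (t - s) x y * f s y (w s y) ∂m)
        (volume.restrict (Ioo 0 t)) := by
    intro w hw t ht x
    have h1 : ContinuousOn (fun z : ℝ × X => p (t - z.1) x z.2)
        (Ioo (0:ℝ) t ×ˢ (univ : Set X)) := by
      have hφ : Continuous (fun z : ℝ × X => ((t - z.1 : ℝ), (x, z.2))) := by fun_prop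
      refine ContinuousOn.comp hp_cont hφ.continuousOn ?_
      rintro ⟨s, y⟩ hz
      exact ⟨hts ht hz.1, mem_univ _⟩
    have h2 : AEMeasurable (fun z : ℝ × X => p (t - z.1) x z.2)
        ((volume.restrict (Ioo 0 t)).prod m) := by
      have h3 := h1.aemeasurable (μ := volume.prod m) (measurableSet_Ioo.prod MeasurableSet.univ)
      rwa [← Measure.prod_restrict, Measure.restrict_univ] at h3
    have h3 : Measurable (fun z : ℝ × X => f z.1 z.2 (w z.1 z.2)) :=
      hf_meas.comp (measurable_fst.prodMk (measurable_snd.prodMk hw))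
    have h4 : AEStronglyMeasurable
        (fun z : ℝ × X => p (t - z.1) x z.2 * f z.1 z.2 (w z.1 z.2))
        ((volume.restrict (Ioo 0 t)).prod m) :=
      (h2.mul h3.aemeasurable).aestronglyMeasurable
    exact h4.integral_prod_right'
  -- integrability in time of the inner integral
  have hIntOn : ∀ (w : ℝ → X → ℝ), Measurable (fun q : ℝ × X => w q.1 q.2) →
      ∀ t ∈ Icc (0:ℝ) T, ∀ x : X,
      IntegrableOn (fun s => ∫ y, p (t - s) x y * f s y (w s y) ∂m)
        (Ioo 0 t) volume := by
    intro w hw t ht x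
    refine Integrable.mono' (g := fun _ => Cf)
      ((integrableOn_const_iff (C := Cf)).2 (Or.inr measure_Ioo_lt_top)) (hAESM w hw t ht x) ?_
    filter_upwards [ae_restrict_mem measurableSet_Ioo] with s hs
    exact (hInner w hw s (hIooIcc ht hs) (t - s) (hts ht hs) x).2
  -- bound on the Duhamel term
  have hFbdd : ∀ (w : ℝ → X → ℝ), Measurable (fun q : ℝ × X => w q.1 q.2) →
      ∀ t ∈ Icc (0:ℝ) T, ∀ x : X,
      |∫ s in Ioo (0:ℝ) t, ∫ y, p (t - s) x y * f s y (w s y) ∂m| ≤ Cf * t := by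
    intro w hw t ht x
    calc |∫ s in Ioo (0:ℝ) t, ∫ y, p (t - s) x y * f s y (w s y) ∂m|
        ≤ ∫ _s in Ioo (0:ℝ) t, Cf := by
          rw [← Real.norm_eq_abs]
          refine (norm_integral_le_integral_norm _).trans ?_
          refine integral_mono_of_nonneg
            (Filter.Eventually.of_forall fun s => norm_nonneg _)
            ((integrableOn_const_iff (C := Cf)).2 (Or.inr measure_Ioo_lt_top)) ?_
          filter_upwards [ae_restrict_mem measurableSet_Ioo] with s hs
          exact (hInner w hw s (hIooIcc ht hs) (t - s) (hts ht hs) x).2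
      _ = Cf * t := by
          rw [setIntegral_const]
          rw [Real.volume_real_Ioo_of_le ht.1, sub_zero]
          rw [smul_eq_mul, mul_comm]
  -- Lipschitz-type estimate on the Duhamel term
  have hFdiff : ∀ (w w' : ℝ → X → ℝ),
      Measurable (fun q : ℝ × X => w q.1 q.2) →
      Measurable (fun q : ℝ × X => w' q.1 q.2) →
      ∀ (n : ℕ) (c : ℝ), (∀ s ∈ Ioo (0:ℝ) T, ∀ y, |w s y - w' s y| ≤ c * s ^ n) →
      ∀ t ∈ Icc (0:ℝ) T, ∀ x : X,
      |(∫ s in Ioo (0:ℝ) t, ∫ y, p (t - s) x y * f s y (w s y) ∂m)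
        - ∫ s in Ioo (0:ℝ) t, ∫ y, p (t - s) x y * f s y (w' s y) ∂m|
        ≤ Kf * c * t ^ (n + 1) / ((n : ℝ) + 1) := by
    intro w w' hw hw' n c hc t ht x
    have hIoosub : ∀ {s : ℝ}, s ∈ Ioo (0:ℝ) t → s ∈ Ioo (0:ℝ) T := by
      intro s hs
      rcases lt_or_eq_of_le ht.2 with h | h
      · exact ⟨hs.1, hs.2.trans h⟩
      · exact ⟨hs.1, h ▸ hs.2⟩
    have hrhs : IntegrableOn (fun s : ℝ => Kf * (c * s ^ n)) (Ioo 0 t) volume := by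
      refine (Continuous.integrableOn_Icc (a := 0) (b := t) (by fun_prop)).mono_set
        Ioo_subset_Icc_self
    have step1 : |(∫ s in Ioo (0:ℝ) t, ∫ y, p (t - s) x y * f s y (w s y) ∂m)
        - ∫ s in Ioo (0:ℝ) t, ∫ y, p (t - s) x y * f s y (w' s y) ∂m|
        ≤ ∫ s in Ioo (0:ℝ) t, Kf * (c * s ^ n) := by
      rw [← integral_sub (hIntOn w hw t ht x) (hIntOn w' hw' t ht x), ← Real.norm_eq_abs]
      refine (norm_integral_le_integral_norm _).trans ?_
      refine integral_mono_of_nonneg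
        (Filter.Eventually.of_forall fun s => norm_nonneg _) hrhs ?_
      filter_upwards [ae_restrict_mem measurableSet_Ioo] with s hs
      exact hInnerLip w w' hw hw' s (hIooIcc ht hs) (c * s ^ n)
        (fun y => hc s (hIoosub hs) y) (t - s) (hts ht hs) x
    refine step1.trans_eq ?_
    have hpow : ∫ s in Ioo (0:ℝ) t, s ^ n = t ^ (n + 1) / ((n : ℝ) + 1) := by
      rw [← integral_Ioc_eq_integral_Ioo, ← intervalIntegral.integral_of_le ht.1,
        integral_pow]
      simp
    calc ∫ s in Ioo (0:ℝ) t, Kf * (c * s ^ n)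
        = Kf * (c * ∫ s in Ioo (0:ℝ) t, s ^ n) := by
          rw [integral_const_mul, integral_const_mul]
      _ = Kf * c * t ^ (n + 1) / ((n : ℝ) + 1) := by rw [hpow]; ring
  -- continuity of the Duhamel term
  have hFcont : ∀ (w : ℝ → X → ℝ), Measurable (fun q : ℝ × X => w q.1 q.2) →
      ContinuousOn (fun q : ℝ × X =>
        ∫ s in Ioo (0:ℝ) q.1, ∫ y, p (q.1 - s) q.2 y * f s y (w s y) ∂m)
        (Icc (0:ℝ) T ×ˢ (univ : Set X)) := by
    intro w hw
    rintro ⟨t₀, x₀⟩ hq₀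
    have ht₀ : t₀ ∈ Icc (0:ℝ) T := hq₀.1
    set l := 𝓝[Icc (0:ℝ) T ×ˢ (univ : Set X)] ((t₀, x₀) : ℝ × X) with hldef
    have hrw : ∀ q : ℝ × X, q ∈ Icc (0:ℝ) T ×ˢ (univ : Set X) →
        (∫ s in Ioo (0:ℝ) q.1, ∫ y, p (q.1 - s) q.2 y * f s y (w s y) ∂m)
        = ∫ s in Ioo (0:ℝ) T,
            (Iio q.1).indicator
              (fun s => ∫ y, p (q.1 - s) q.2 y * f s y (w s y) ∂m) s := by
      intro q hq
      rw [setIntegral_indicator measurableSet_Iio]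
      have hset : Ioo (0:ℝ) q.1 = Ioo 0 T ∩ Iio q.1 := by
        ext s
        simp only [mem_Ioo, mem_inter_iff, mem_Iio]
        exact ⟨fun h => ⟨⟨h.1, h.2.trans_le hq.1.2⟩, h.2⟩, fun h => ⟨h.1.1, h.2⟩⟩
      rw [hset]
    have htt : Tendsto (fun q : ℝ × X => q.1) l (𝓝 t₀) :=
      (continuous_fst.tendsto _).mono_left nhdsWithin_le_nhds
    have hdct : Tendsto (fun q : ℝ × X => ∫ s in Ioo (0:ℝ) T,
        (Iio q.1).indicator
          (fun s => ∫ y, p (q.1 - s) q.2 y * f s y (w s y) ∂m) s) l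
        (𝓝 (∫ s in Ioo (0:ℝ) T,
        (Iio t₀).indicator
          (fun s => ∫ y, p (t₀ - s) x₀ y * f s y (w s y) ∂m) s)) := by
      refine tendsto_integral_filter_of_dominated_convergence (bound := fun _ => Cf)
        ?_ ?_ ((integrableOn_const_iff (C := Cf)).2 (Or.inr measure_Ioo_lt_top)) ?_
      · filter_upwards [eventually_mem_nhdsWithin] with q hq
        rw [aestronglyMeasurable_indicator_iff measurableSet_Iio,
          Measure.restrict_restrict measurableSet_Iio]
        have hset : Iio q.1 ∩ Ioo 0 T = Ioo (0:ℝ) q.1 := by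
          ext s
          simp only [mem_Ioo, mem_inter_iff, mem_Iio]
          exact ⟨fun h => ⟨h.2.1, h.1⟩, fun h => ⟨h.2, h.1, h.2.trans_le hq.1.2⟩⟩
        rw [hset]
        exact hAESM w hw q.1 hq.1 q.2
      · filter_upwards [eventually_mem_nhdsWithin] with q hq
        filter_upwards [ae_restrict_mem measurableSet_Ioo] with s hs
        by_cases hlt : s < q.1
        · rw [indicator_of_mem (mem_Iio.2 hlt), Real.norm_eq_abs]
          exact (hInner w hw s ⟨hs.1.le, hs.2.le⟩ (q.1 - s)
            ⟨by linarith, by linarith [hq.1.2, hs.1]⟩ q.2).2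
        · rw [indicator_of_notMem (fun h => hlt (mem_Iio.1 h))]
          simpa using hCf.le
      · have hne : ∀ᵐ s ∂(volume.restrict (Ioo (0:ℝ) T)), s ≠ t₀ := by
          refine ae_iff.2 ?_
          have hseteq : {s : ℝ | ¬ s ≠ t₀} = {t₀} := by ext s; simp [not_not]
          rw [hseteq]
          refine le_antisymm ?_ zero_le
          calc (volume.restrict (Ioo (0:ℝ) T)) {t₀} ≤ volume {t₀} :=
                Measure.restrict_apply_le _ _
            _ = 0 := Real.volume_singleton
        filter_upwards [ae_restrict_mem measurableSet_Ioo, hne] with s hs hsne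
        rcases lt_or_gt_of_ne hsne with hlt | hgt
        · -- s < t₀ : Scheffé convergence
          have hev1 : ∀ᶠ q in l, s < q.1 := htt.eventually_const_lt hlt
          have hevτ : ∀ᶠ q in l, q.1 - s ∈ Ioc (0:ℝ) T := by
            filter_upwards [hev1, eventually_mem_nhdsWithin] with q h1 h2
            exact ⟨by linarith, by linarith [h2.1.2, hs.1]⟩
          have hτ₀ : t₀ - s ∈ Ioc (0:ℝ) T := ⟨by linarith, by linarith [ht₀.2, hs.1]⟩
          have hker : Tendsto
              (fun q : ℝ × X => ∫ y, p (q.1 - s) q.2 y * f s y (w s y) ∂m) l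
              (𝓝 (∫ y, p (t₀ - s) x₀ y * f s y (w s y) ∂m)) := by
            refine aux_scheffe (k := fun (q : ℝ × X) (y : X) => p (q.1 - s) q.2 y)
              (k₀ := fun y => p (t₀ - s) x₀ y) ?_ ?_ ?_ (hpint _ hτ₀ x₀)
              (hp_nonneg _ hτ₀ x₀) (hp_one _ hτ₀ x₀) ?_
              (hgmeas w hw s).aestronglyMeasurable (fun y => hf_bdd s ⟨hs.1.le, hs.2.le⟩ y _)
            · filter_upwards [hevτ] with q hq using hpint _ hq q.2
            · filter_upwards [hevτ] with q hq using hp_nonneg _ hq q.2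
            · filter_upwards [hevτ] with q hq using hp_one _ hq q.2
            · intro y
              have hmem : ((t₀ - s : ℝ), ((x₀, y) : X × X))
                  ∈ Ioc (0:ℝ) T ×ˢ (univ : Set (X × X)) := ⟨hτ₀, mem_univ _⟩
              have hcw := hp_cont _ hmem
              have hmap : Tendsto (fun q : ℝ × X => ((q.1 - s : ℝ), ((q.2, y) : X × X))) l
                  (𝓝[Ioc (0:ℝ) T ×ˢ (univ : Set (X × X))] ((t₀ - s : ℝ), ((x₀, y) : X × X))) := by
                rw [tendsto_nhdsWithin_iff]
                constructor
                · have h1 : Tendsto (fun q : ℝ × X => (q.1 - s : ℝ)) l (𝓝 (t₀ - s)) :=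
                    htt.sub_const s
                  have h2 : Tendsto (fun q : ℝ × X => q.2) l (𝓝 x₀) :=
                    (continuous_snd.tendsto _).mono_left nhdsWithin_le_nhds
                  exact h1.prodMk_nhds (h2.prodMk_nhds tendsto_const_nhds)
                · filter_upwards [hevτ] with q hq using ⟨hq, mem_univ _⟩
              exact hcw.tendsto.comp hmap
          rw [indicator_of_mem (mem_Iio.2 hlt)]
          refine Tendsto.congr' ?_ hker
          filter_upwards [hev1] with q h1
          exact (indicator_of_mem (mem_Iio.2 h1)
            (fun s' => ∫ y, p (q.1 - s') q.2 y * f s' y (w s' y) ∂m)).symm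
        · -- s > t₀ : both sides vanish
          have hev1 : ∀ᶠ q in l, q.1 < s := htt.eventually_lt_const hgt
          rw [indicator_of_notMem (fun h => absurd (mem_Iio.1 h) (not_lt.2 hgt.le))]
          refine Tendsto.congr' ?_ tendsto_const_nhds
          filter_upwards [hev1] with q h1
          exact (indicator_of_notMem (fun h => absurd (mem_Iio.1 h) (not_lt.2 h1.le))
            (fun s' => ∫ y, p (q.1 - s') q.2 y * f s' y (w s' y) ∂m)).symm
    show ContinuousWithinAt _ _ _
    rw [ContinuousWithinAt, hrw (t₀, x₀) hq₀]
    refine Tendsto.congr' ?_ hdct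
    filter_upwards [eventually_mem_nhdsWithin] with q hq
    exact (hrw q hq).symm
  -- measurability of the Picard map
  have hstripm : MeasurableSet (Icc (0:ℝ) T ×ˢ (univ : Set X)) :=
    measurableSet_Icc.prod MeasurableSet.univ
  have hΦmeas : ∀ (w : ℝ → X → ℝ), Measurable (fun q : ℝ × X => w q.1 q.2) →
      Measurable (fun q : ℝ × X => if q.1 ∈ Icc (0:ℝ) T then
        v q.1 q.2 + ∫ s in Ioo (0:ℝ) q.1, ∫ y, p (q.1 - s) q.2 y * f s y (w s y) ∂m
        else 0) := by
    intro w hw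
    have hind : (fun q : ℝ × X => if q.1 ∈ Icc (0:ℝ) T then
        v q.1 q.2 + ∫ s in Ioo (0:ℝ) q.1, ∫ y, p (q.1 - s) q.2 y * f s y (w s y) ∂m
        else 0)
        = (Icc (0:ℝ) T ×ˢ (univ : Set X)).indicator (fun q : ℝ × X =>
          v q.1 q.2 + ∫ s in Ioo (0:ℝ) q.1, ∫ y, p (q.1 - s) q.2 y * f s y (w s y) ∂m) := by
      funext q
      by_cases hq : q.1 ∈ Icc (0:ℝ) T
      · rw [if_pos hq]
        exact (indicator_of_mem
          (show q ∈ Icc (0:ℝ) T ×ˢ (univ : Set X) from ⟨hq, mem_univ _⟩)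
          (fun q : ℝ × X => v q.1 q.2
            + ∫ s in Ioo (0:ℝ) q.1, ∫ y, p (q.1 - s) q.2 y * f s y (w s y) ∂m)).symm
      · rw [if_neg hq]
        exact (indicator_of_notMem (fun h => hq h.1)
          (fun q : ℝ × X => v q.1 q.2
            + ∫ s in Ioo (0:ℝ) q.1, ∫ y, p (q.1 - s) q.2 y * f s y (w s y) ∂m)).symm
    rw [hind]
    exact aux_ind_meas hstripm (hv_cont.add (hFcont w hw))
  -- Picard iterates
  obtain ⟨U, hU0, hUS⟩ : ∃ U : ℕ → ℝ → X → ℝ,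
      (U 0 = fun t x => if t ∈ Icc (0:ℝ) T then v t x else 0) ∧
      ∀ n, U (n+1) = fun t x => if t ∈ Icc (0:ℝ) T then
        v t x + ∫ s in Ioo (0:ℝ) t, ∫ y, p (t - s) x y * f s y (U n s y) ∂m else 0 :=
    ⟨fun n => Nat.rec (fun t x => if t ∈ Icc (0:ℝ) T then v t x else 0)
      (fun _ w => fun t x => if t ∈ Icc (0:ℝ) T then
        v t x + ∫ s in Ioo (0:ℝ) t, ∫ y, p (t - s) x y * f s y (w s y) ∂m else 0) n,
      rfl, fun _ => rfl⟩
  have hUmeas : ∀ n, Measurable (fun q : ℝ × X => U n q.1 q.2) := by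
    intro n
    induction n with
    | zero =>
      rw [hU0]
      have hind : (fun q : ℝ × X => if q.1 ∈ Icc (0:ℝ) T then v q.1 q.2 else 0)
          = (Icc (0:ℝ) T ×ˢ (univ : Set X)).indicator (fun q : ℝ × X => v q.1 q.2) := by
        funext q
        by_cases hq : q.1 ∈ Icc (0:ℝ) T
        · rw [if_pos hq]
          exact (indicator_of_mem
            (show q ∈ Icc (0:ℝ) T ×ˢ (univ : Set X) from ⟨hq, mem_univ _⟩)
            (fun q : ℝ × X => v q.1 q.2)).symm
        · rw [if_neg hq]
          exact (indicator_of_notMem (fun h => hq h.1)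
            (fun q : ℝ × X => v q.1 q.2)).symm
      show Measurable (fun q : ℝ × X => if q.1 ∈ Icc (0:ℝ) T then v q.1 q.2 else 0)
      rw [hind]
      exact aux_ind_meas hstripm hv_cont
    | succ n ih =>
      rw [hUS n]
      exact hΦmeas (U n) ih
  -- arithmetic helper
  have harith : ∀ (a : ℝ) (n : ℕ) (t : ℝ),
      Kf * (a * Kf ^ n / (n.factorial : ℝ)) * t ^ (n + 1) / ((n : ℝ) + 1)
      = a * Kf ^ (n + 1) * t ^ (n + 1) / ((n + 1).factorial : ℝ) := by
    intro a n t
    rw [Nat.factorial_succ]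
    push_cast
    have h1 : ((n.factorial : ℝ)) ≠ 0 := Nat.cast_ne_zero.2 n.factorial_ne_zero
    have h2 : ((n : ℝ) + 1) ≠ 0 := by positivity
    field_simp
    ring
  -- Picard difference bound
  have hUdiff : ∀ n, ∀ t ∈ Icc (0:ℝ) T, ∀ x : X,
      |U (n+1) t x - U n t x| ≤ (Cf * T) * Kf ^ n * t ^ n / (n.factorial : ℝ) := by
    intro n
    induction n with
    | zero =>
      intro t ht x
      have e1 : U 1 t x = v t x
          + ∫ s in Ioo (0:ℝ) t, ∫ y, p (t - s) x y * f s y (U 0 s y) ∂m := by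
        rw [hUS 0]; exact if_pos ht
      have e0 : U 0 t x = v t x := by rw [hU0]; exact if_pos ht
      rw [e1, e0, add_sub_cancel_left]
      simp only [pow_zero, Nat.factorial_zero, Nat.cast_one, mul_one, div_one]
      exact (hFbdd (U 0) (hUmeas 0) t ht x).trans
        (mul_le_mul_of_nonneg_left ht.2 hCf.le)
    | succ n ih =>
      intro t ht x
      have e1 : U (n+2) t x = v t x
          + ∫ s in Ioo (0:ℝ) t, ∫ y, p (t - s) x y * f s y (U (n+1) s y) ∂m := by
        rw [hUS (n+1)]; exact if_pos ht
      have e2 : U (n+1) t x = v t x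
          + ∫ s in Ioo (0:ℝ) t, ∫ y, p (t - s) x y * f s y (U n s y) ∂m := by
        rw [hUS n]; exact if_pos ht
      rw [e1, e2, add_sub_add_left_eq_sub]
      refine (hFdiff (U (n+1)) (U n) (hUmeas _) (hUmeas _) n
        ((Cf * T) * Kf ^ n / (n.factorial : ℝ)) ?_ t ht x).trans_eq (harith _ n t)
      intro s hs y
      exact (ih s ⟨hs.1.le, hs.2.le⟩ y).trans_eq (by ring)
  have hUzero : ∀ n (t : ℝ) (x : X), t ∉ Icc (0:ℝ) T → U n t x = 0 := by
    intro n t x ht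
    cases n with
    | zero => rw [hU0]; simp only [if_neg ht]
    | succ n => rw [hUS n]; simp only [if_neg ht]
  -- convergence of the iterates
  set d : ℕ → ℝ := fun n => (Cf * T) * ((Kf * T) ^ n / (n.factorial : ℝ)) with hd
  have hdsum : Summable d := (Real.summable_pow_div_factorial (Kf * T)).mul_left (Cf * T)
  have hdist : ∀ n (t : ℝ) (x : X), dist (U n t x) (U (n+1) t x) ≤ d n := by
    intro n t x
    by_cases ht : t ∈ Icc (0:ℝ) T
    · rw [Real.dist_eq, abs_sub_comm]
      refine (hUdiff n t ht x).trans ?_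
      have h1 : t ^ n ≤ T ^ n := pow_le_pow_left₀ ht.1 ht.2 n
      have h2 : (Cf * T) * Kf ^ n * t ^ n / (n.factorial : ℝ)
          ≤ (Cf * T) * Kf ^ n * T ^ n / (n.factorial : ℝ) := by
        gcongr
      refine h2.trans_eq ?_
      simp only [hd]
      rw [mul_pow]
      ring
    · rw [hUzero n t x ht, hUzero (n+1) t x ht, dist_self]
      simp only [hd]
      positivity
  -- the limit function
  have hcauchy : ∀ (t : ℝ) (x : X), ∃ r : ℝ, Tendsto (fun n => U n t x) atTop (𝓝 r) :=
    fun t x => cauchySeq_tendsto_of_complete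
      (cauchySeq_of_dist_le_of_summable d (fun n => hdist n t x) hdsum)
  choose u hu using hcauchy
  -- tail estimate
  have htail : ∀ (n : ℕ) (t : ℝ) (x : X), dist (U n t x) (u t x) ≤ ∑' k, d (n + k) :=
    fun n t x => dist_le_tsum_of_dist_le_of_tendsto d (fun k => hdist k t x) hdsum (hu t x) n
  have htail0 : Tendsto (fun n => ∑' k, d (n + k)) atTop (𝓝 0) := by
    have h := tendsto_sum_nat_add d
    refine h.congr fun n => ?_
    exact tsum_congr fun k => by rw [add_comm]
  have htailnn : ∀ n, 0 ≤ ∑' k, d (n + k) := by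
    intro n
    refine tsum_nonneg fun k => ?_
    simp only [hd]
    positivity
  -- measurability of the limit
  have humeas : Measurable (fun q : ℝ × X => u q.1 q.2) := by
    refine measurable_of_tendsto_metrizable' atTop (fun n => hUmeas n) ?_
    rw [tendsto_pi_nhds]
    intro q
    exact hu q.1 q.2
  -- boundedness of the limit
  have hubdd : ∀ t ∈ Icc (0:ℝ) T, ∀ x : X, |u t x| ≤ Cv + Cf * T := by
    intro t ht x
    have hb : ∀ n, |U n t x| ≤ Cv + Cf * T := by
      intro n
      cases n with
      | zero =>
        have e0 : U 0 t x = v t x := by rw [hU0]; exact if_pos ht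
        rw [e0]
        have : (0:ℝ) ≤ Cf * T := by positivity
        linarith [hv_bdd t ht x]
      | succ n =>
        have e1 : U (n+1) t x = v t x
            + ∫ s in Ioo (0:ℝ) t, ∫ y, p (t - s) x y * f s y (U n s y) ∂m := by
          rw [hUS n]; exact if_pos ht
        rw [e1]
        have h1 := hv_bdd t ht x
        have h2 := hFbdd (U n) (hUmeas n) t ht x
        have h3 : Cf * t ≤ Cf * T := mul_le_mul_of_nonneg_left ht.2 hCf.le
        calc |v t x + ∫ s in Ioo (0:ℝ) t, ∫ y, p (t - s) x y * f s y (U n s y) ∂m|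
            ≤ |v t x| + |∫ s in Ioo (0:ℝ) t, ∫ y, p (t - s) x y * f s y (U n s y) ∂m| :=
              abs_add_le _ _
          _ ≤ Cv + Cf * T := by linarith
    exact le_of_tendsto' (hu t x).abs hb
  -- the fixed point equation
  have hueq : ∀ t ∈ Icc (0:ℝ) T, ∀ x : X,
      u t x = v t x + ∫ s in Ioo (0:ℝ) t, ∫ y, p (t - s) x y * f s y (u s y) ∂m := by
    intro t ht x
    have h1 : Tendsto (fun n => U (n+1) t x) atTop (𝓝 (u t x)) :=
      (hu t x).comp (tendsto_add_atTop_nat 1)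
    have hFt : Tendsto (fun n : ℕ =>
        ∫ s in Ioo (0:ℝ) t, ∫ y, p (t - s) x y * f s y (U n s y) ∂m) atTop
        (𝓝 (∫ s in Ioo (0:ℝ) t, ∫ y, p (t - s) x y * f s y (u s y) ∂m)) := by
      rw [tendsto_iff_norm_sub_tendsto_zero]
      have hbd : ∀ n : ℕ, ‖(∫ s in Ioo (0:ℝ) t, ∫ y, p (t - s) x y * f s y (U n s y) ∂m)
          - ∫ s in Ioo (0:ℝ) t, ∫ y, p (t - s) x y * f s y (u s y) ∂m‖
          ≤ Kf * (∑' k, d (n + k)) * t := by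
        intro n
        rw [Real.norm_eq_abs]
        have hc : ∀ s ∈ Ioo (0:ℝ) T, ∀ y : X,
            |U n s y - u s y| ≤ (∑' k, d (n + k)) * s ^ 0 := by
          intro s _ y
          rw [pow_zero, mul_one, ← Real.dist_eq]
          exact htail n s y
        have := hFdiff (U n) u (hUmeas n) humeas 0 (∑' k, d (n + k)) hc t ht x
        simpa using this
      refine squeeze_zero' (Filter.Eventually.of_forall fun n => norm_nonneg _)
        (Filter.Eventually.of_forall hbd) ?_
      have : Tendsto (fun n : ℕ => Kf * (∑' k, d (n + k)) * t) atTop (𝓝 (Kf * 0 * t)) :=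
        (htail0.const_mul Kf).mul_const t
      simpa using this
    have h2 : Tendsto (fun n : ℕ =>
        v t x + ∫ s in Ioo (0:ℝ) t, ∫ y, p (t - s) x y * f s y (U n s y) ∂m) atTop
        (𝓝 (v t x + ∫ s in Ioo (0:ℝ) t, ∫ y, p (t - s) x y * f s y (u s y) ∂m)) :=
      tendsto_const_nhds.add hFt
    have heqn : ∀ n : ℕ, U (n+1) t x = v t x
        + ∫ s in Ioo (0:ℝ) t, ∫ y, p (t - s) x y * f s y (U n s y) ∂m := by
      intro n; rw [hUS n]; exact if_pos ht
    exact tendsto_nhds_unique h1 (h2.congr fun n => (heqn n).symm)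
  -- continuity of the limit
  have hucont : ContinuousOn (fun q : ℝ × X => u q.1 q.2) (Icc (0:ℝ) T ×ˢ univ) := by
    refine ContinuousOn.congr (hv_cont.add (hFcont u humeas)) ?_
    rintro ⟨t, x⟩ hq
    exact hueq t hq.1 x
  refine ⟨u, ⟨humeas, ⟨Cv + Cf * T, hubdd⟩, hueq, hucont⟩, ?_⟩
  -- uniqueness
  intro u' hu'meas hu'bd hu'eq
  obtain ⟨Cu', hu'bdd⟩ := hu'bd
  have hK0 : ∀ n, ∀ t ∈ Icc (0:ℝ) T, ∀ x : X,
      |u' t x - u t x| ≤ (Cu' + (Cv + Cf * T)) * Kf ^ n * t ^ n / (n.factorial : ℝ) := by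
    intro n
    induction n with
    | zero =>
      intro t ht x
      simp only [pow_zero, Nat.factorial_zero, Nat.cast_one, mul_one, div_one]
      calc |u' t x - u t x| ≤ |u' t x| + |u t x| := abs_sub _ _
        _ ≤ Cu' + (Cv + Cf * T) := add_le_add (hu'bdd t ht x) (hubdd t ht x)
    | succ n ih =>
      intro t ht x
      have hsub : u' t x - u t x
          = (∫ s in Ioo (0:ℝ) t, ∫ y, p (t - s) x y * f s y (u' s y) ∂m)
            - ∫ s in Ioo (0:ℝ) t, ∫ y, p (t - s) x y * f s y (u s y) ∂m := by
        rw [hu'eq t ht x, hueq t ht x]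
        ring
      rw [hsub]
      refine (hFdiff u' u hu'meas humeas n
        ((Cu' + (Cv + Cf * T)) * Kf ^ n / (n.factorial : ℝ)) ?_ t ht x).trans_eq
        (harith _ n t)
      intro s hs y
      exact (ih s ⟨hs.1.le, hs.2.le⟩ y).trans_eq (by ring)
  intro t ht x
  have htd : Tendsto (fun n : ℕ =>
      (Cu' + (Cv + Cf * T)) * ((Kf * t) ^ n / (n.factorial : ℝ))) atTop (𝓝 0) := by
    have := (Real.summable_pow_div_factorial (Kf * t)).tendsto_atTop_zero.const_mul
      (Cu' + (Cv + Cf * T))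
    simpa using this
  have hle : |u' t x - u t x| ≤ 0 := by
    refine ge_of_tendsto htd (Filter.Eventually.of_forall fun n => ?_)
    refine (hK0 n t ht x).trans_eq ?_
    rw [mul_pow]
    ring
  have := abs_nonpos_iff.1 hle
  exact sub_eq_zero.1 this
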